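/- Let ε > 0 and let f: Ω^C → 𝒳 be data with d^Ω_∞(f) < ε/(4 B'_ν(Ω)). Set p = max{α₁,α₂,α₃,α₄,β₁,β₂,γ} and assume d₁^Ω(f) ≤ ε² / (8² · 20 · p · C_ν(Ω) · B'_ν(Ω)²). Here B'_ν(Ω) ≥ 1 is a constant such that for any data g: Ω^C → 𝒳 every minimizer u* of the noiseless inpainting functional with data g satisfies d_{𝒳,m}(u*_{i,j}, g_{ν(i,j)}) ≤ B'_ν(Ω) d^Ω_∞(g) for all pixels, and C_ν(Ω) is a constant such that d₁(E_ν g) ≤ C_ν(Ω) d₁^Ω(g) for all g. Then every minimizer x* of the inpainting functional J_Ω (either the noiseless constrained model or the noisy model) satisfies e_∞(x*, f) ≤ ε. -/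

import Mathlib

open scoped Classical

noncomputable section

/-- `(t)_{2π}`: the unique element of `[-π, π)` with `t - (t)_{2π} ∈ 2πℤ`. -/
def wrap (t : ℝ) : ℝ := t - 2 * Real.pi * (⌊(t + Real.pi) / (2 * Real.pi)⌋ : ℤ)

/-- A point of `𝒳 = (𝕊¹)^m × ℝⁿ`, identified with `[-π,π)^m × ℝⁿ`; points of the universal
covering `𝒴 = ℝ^{m+n}` are represented by the same type without the range restriction. -/
abbrev Pt (m n : ℕ) := (Fin m → ℝ) × (Fin n → ℝ)

/-- The pixel grid `Ω₀ = {1,…,N} × {1,…,M}`. -/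
abbrev Grid (N M : ℕ) := Fin N × Fin M

/-- Distance on the cyclic components of `𝒳`. -/
def dXm {m n : ℕ} (x y : Pt m n) : ℝ :=
  Real.sqrt (∑ i, (wrap (x.1 i - y.1 i)) ^ 2)

/-- Distance on `𝒳`. -/
def dX {m n : ℕ} (x y : Pt m n) : ℝ :=
  Real.sqrt ((∑ i, (wrap (x.1 i - y.1 i)) ^ 2) + ∑ i, (x.2 i - y.2 i) ^ 2)

/-- Combined absolute finite difference of `x ∈ 𝒳^d` with respect to the weight `w`. -/
def Dw {m n : ℕ} (d : ℕ) (w : Fin d → ℝ) (x : Fin d → Pt m n) : ℝ :=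
  Real.sqrt
    ((sInf {r : ℝ | ∃ k : Fin m → Fin d → ℤ,
        r = ∑ i, (∑ j, ((x j).1 i + 2 * Real.pi * (k i j : ℝ)) * w j) ^ 2}) +
      ∑ i, (∑ j, (x j).2 i * w j) ^ 2)

/-- First order combined absolute difference `D₁`. -/
def D1 {m n : ℕ} (a b : Pt m n) : ℝ := Dw 2 ![(-1 : ℝ), 1] ![a, b]

/-- Second order combined absolute difference `D₂`. -/
def D2 {m n : ℕ} (a b c : Pt m n) : ℝ := Dw 3 ![(1 : ℝ), -2, 1] ![a, b, c]

/-- Mixed second order combined absolute difference `D₁,₁`. -/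
def D11 {m n : ℕ} (a b c d : Pt m n) : ℝ := Dw 4 ![(-1 : ℝ), 1, 1, -1] ![a, b, c, d]

/-- First order TV term with horizontal, vertical and two diagonal directions. -/
def TV1 {m n : ℕ} (N M : ℕ) (a1 a2 a3 a4 : ℝ) (x : Grid N M → Pt m n) : ℝ :=
  a1 * (∑ p : Grid N M,
      if h : (p.1 : ℕ) + 1 < N then D1 (x p) (x (⟨(p.1 : ℕ) + 1, h⟩, p.2)) else 0)
  + a2 * (∑ p : Grid N M,
      if h : (p.2 : ℕ) + 1 < M then D1 (x p) (x (p.1, ⟨(p.2 : ℕ) + 1, h⟩)) else 0)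
  + (a3 / Real.sqrt 2) * (∑ p : Grid N M,
      if h : (p.1 : ℕ) + 1 < N ∧ (p.2 : ℕ) + 1 < M then
        D1 (x p) (x (⟨(p.1 : ℕ) + 1, h.1⟩, ⟨(p.2 : ℕ) + 1, h.2⟩)) else 0)
  + (a4 / Real.sqrt 2) * (∑ p : Grid N M,
      if h : (p.1 : ℕ) + 1 < N ∧ (p.2 : ℕ) + 1 < M then
        D1 (x (p.1, ⟨(p.2 : ℕ) + 1, h.2⟩)) (x (⟨(p.1 : ℕ) + 1, h.1⟩, p.2)) else 0)

/-- Second order TV term (horizontal and vertical). -/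
def TV2 {m n : ℕ} (N M : ℕ) (b1 b2 : ℝ) (x : Grid N M → Pt m n) : ℝ :=
  b1 * (∑ p : Grid N M,
      if h : (p.1 : ℕ) + 2 < N then
        D2 (x p) (x (⟨(p.1 : ℕ) + 1, by omega⟩, p.2)) (x (⟨(p.1 : ℕ) + 2, h⟩, p.2))
      else 0)
  + b2 * (∑ p : Grid N M,
      if h : (p.2 : ℕ) + 2 < M then
        D2 (x p) (x (p.1, ⟨(p.2 : ℕ) + 1, by omega⟩)) (x (p.1, ⟨(p.2 : ℕ) + 2, h⟩))
      else 0)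

/-- Mixed second order TV term over `2×2` blocks. -/
def TV11 {m n : ℕ} (N M : ℕ) (g : ℝ) (x : Grid N M → Pt m n) : ℝ :=
  g * (∑ p : Grid N M,
      if h : (p.1 : ℕ) + 1 < N ∧ (p.2 : ℕ) + 1 < M then
        D11 (x p) (x (⟨(p.1 : ℕ) + 1, h.1⟩, p.2)) (x (p.1, ⟨(p.2 : ℕ) + 1, h.2⟩))
          (x (⟨(p.1 : ℕ) + 1, h.1⟩, ⟨(p.2 : ℕ) + 1, h.2⟩))
      else 0)

/-- The full regularizer `αTV₁ + βTV₂ + γTV₁,₁`. -/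
def TVall {m n : ℕ} (N M : ℕ) (a1 a2 a3 a4 b1 b2 g : ℝ) (x : Grid N M → Pt m n) : ℝ :=
  TV1 N M a1 a2 a3 a4 x + TV2 N M b1 b2 x + TV11 N M g x

/-- An image is `𝒳`-valued when all cyclic components lie in `[-π, π)`. -/
def inXimg {m n N M : ℕ} (x : Grid N M → Pt m n) : Prop :=
  ∀ p, ∀ i, (x p).1 i ∈ Set.Ico (-Real.pi) Real.pi

/-- The noisy inpainting functional `J_Ω`. -/
def Jnoisy {m n : ℕ} (N M : ℕ) (Om : Finset (Grid N M)) (f : Grid N M → Pt m n)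
    (a1 a2 a3 a4 b1 b2 g : ℝ) (x : Grid N M → Pt m n) : ℝ :=
  (1 / 2) * (∑ p ∈ Omᶜ, dX (x p) (f p) ^ 2) + TVall N M a1 a2 a3 a4 b1 b2 g x

/-- `x` is a minimizer of the noisy inpainting functional over `𝒳`-valued images. -/
def MinNoisy {m n : ℕ} (N M : ℕ) (Om : Finset (Grid N M)) (f : Grid N M → Pt m n)
    (a1 a2 a3 a4 b1 b2 g : ℝ) (x : Grid N M → Pt m n) : Prop :=
  inXimg x ∧ ∀ y, inXimg y →
    Jnoisy N M Om f a1 a2 a3 a4 b1 b2 g x ≤ Jnoisy N M Om f a1 a2 a3 a4 b1 b2 g y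

/-- `x` is a minimizer of the noiseless (constrained) inpainting functional over
`𝒳`-valued images agreeing with the data `f` on `Ω^C`. -/
def MinNoiseless {m n : ℕ} (N M : ℕ) (Om : Finset (Grid N M)) (f : Grid N M → Pt m n)
    (a1 a2 a3 a4 b1 b2 g : ℝ) (x : Grid N M → Pt m n) : Prop :=
  inXimg x ∧ (∀ p ∈ Omᶜ, x p = f p) ∧
    ∀ y, inXimg y → (∀ p ∈ Omᶜ, y p = f p) →
      TVall N M a1 a2 a3 a4 b1 b2 g x ≤ TVall N M a1 a2 a3 a4 b1 b2 g y

/-- Eight-neighborhood relation on the pixel grid. -/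
def eight {N M : ℕ} (p q : Grid N M) : Prop :=
  p ≠ q ∧ |((p.1 : ℕ) : ℤ) - ((q.1 : ℕ) : ℤ)| ≤ 1 ∧ |((p.2 : ℕ) : ℤ) - ((q.2 : ℕ) : ℤ)| ≤ 1

/-- `d^Ω_∞(f)`: maximal cyclic distance between covering-neighbors in `Ω^C`. -/
def dOmSup {m n N M : ℕ} (Om : Finset (Grid N M)) (Nbh : Grid N M → Finset (Grid N M))
    (f : Grid N M → Pt m n) : ℝ :=
  ⨆ pq : Grid N M × Grid N M,
    if pq.1 ∈ Omᶜ ∧ pq.2 ∈ Omᶜ ∧ pq.2 ∈ Nbh pq.1 then dXm (f pq.1) (f pq.2) else 0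

/-- `d_∞(g)`: maximal cyclic distance between eight-neighbors, over all pixels. -/
def d8Sup {m n N M : ℕ} (g : Grid N M → Pt m n) : ℝ :=
  ⨆ pq : Grid N M × Grid N M, if eight pq.1 pq.2 then dXm (g pq.1) (g pq.2) else 0

/-- `d₁^Ω(f)`: sum over `Ω^C` of the maximal cyclic distance to eight-neighbors in `Ω^C`. -/
def d1Om {m n N M : ℕ} (Om : Finset (Grid N M)) (f : Grid N M → Pt m n) : ℝ :=
  ∑ p ∈ Omᶜ, ⨆ q : Grid N M, if q ∈ Omᶜ ∧ eight p q then dXm (f p) (f q) else 0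

/-- `d₁(g)`: sum over all pixels of the maximal cyclic distance to eight-neighbors. -/
def d1full {m n N M : ℕ} (g : Grid N M → Pt m n) : ℝ :=
  ∑ p : Grid N M, ⨆ q : Grid N M, if eight p q then dXm (g p) (g q) else 0

/-- `e_∞(x, f)`: maximal cyclic distance of `x` to the nearest-neighbor extension of `f`. -/
def eSup {m n N M : ℕ} (nu : Grid N M → Grid N M) (x f : Grid N M → Pt m n) : ℝ :=
  ⨆ p : Grid N M, dXm (x p) (f (nu p))

-- ===================== auxiliary lemmas =====================
section Aux
open Real Finset

lemma wrap_mem (t : ℝ) : wrap t ∈ Set.Ico (-Real.pi) Real.pi := by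
  have hpi := Real.pi_pos
  have h2 : (0:ℝ) < 2 * Real.pi := by linarith
  have h1 := Int.floor_le ((t + Real.pi) / (2 * Real.pi))
  have h2' := Int.lt_floor_add_one ((t + Real.pi) / (2 * Real.pi))
  rw [le_div_iff₀ h2] at h1
  rw [div_lt_iff₀ h2] at h2'
  constructor <;> unfold wrap <;> nlinarith

lemma wrap_spec (t : ℝ) : ∃ k : ℤ, wrap t = t + 2 * Real.pi * k :=
  ⟨-⌊(t + Real.pi) / (2 * Real.pi)⌋, by unfold wrap; push_cast; ring⟩

lemma abs_wrap_le (t : ℝ) (k : ℤ) : |wrap t| ≤ |t + 2 * Real.pi * k| := by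
  obtain ⟨K, hK⟩ := wrap_spec t
  have hpi := Real.pi_pos
  have hmem := wrap_mem t
  have hw : |wrap t| ≤ Real.pi := abs_le.mpr ⟨hmem.1, hmem.2.le⟩
  rcases eq_or_ne k K with rfl | h
  · rw [← hK]
  · have hj : (1:ℝ) ≤ |((k - K : ℤ) : ℝ)| := by
      exact_mod_cast Int.one_le_abs (sub_ne_zero.mpr h)
    have heq : t + 2 * Real.pi * k = wrap t + 2 * Real.pi * ((k - K : ℤ) : ℝ) := by
      rw [hK]; push_cast; ring
    rw [heq]
    have habs := abs_add_le (wrap t + 2 * Real.pi * ((k - K : ℤ) : ℝ)) (-(wrap t))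
    rw [show wrap t + 2 * Real.pi * ((k - K : ℤ) : ℝ) + -(wrap t)
        = 2 * Real.pi * ((k - K : ℤ) : ℝ) by ring, abs_neg] at habs
    have habs2 : |2 * Real.pi * ((k - K : ℤ) : ℝ)| = 2 * Real.pi * |((k - K : ℤ) : ℝ)| := by
      rw [abs_mul, abs_of_pos (by linarith)]
    nlinarith [abs_nonneg (wrap t + 2 * Real.pi * ((k - K : ℤ) : ℝ))]

lemma abs_wrap_add (a b : ℝ) : |wrap (a + b)| ≤ |wrap a| + |wrap b| := by
  obtain ⟨K1, h1⟩ := wrap_spec a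
  obtain ⟨K2, h2⟩ := wrap_spec b
  have he : wrap a + wrap b = (a + b) + 2 * Real.pi * ((K1 + K2 : ℤ) : ℝ) := by
    rw [h1, h2]; push_cast; ring
  calc |wrap (a+b)| ≤ |(a+b) + 2*Real.pi*((K1+K2 : ℤ):ℝ)| := abs_wrap_le _ _
    _ = |wrap a + wrap b| := by rw [he]
    _ ≤ _ := abs_add_le _ _

lemma abs_wrap_neg (t : ℝ) : |wrap (-t)| = |wrap t| := by
  obtain ⟨K1, h1⟩ := wrap_spec t
  obtain ⟨K2, h2⟩ := wrap_spec (-t)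
  apply le_antisymm
  · calc |wrap (-t)| ≤ |(-t) + 2*Real.pi*((-K1 : ℤ):ℝ)| := abs_wrap_le _ _
      _ = |-(t + 2*Real.pi*(K1:ℝ))| := by push_cast; ring_nf
      _ = |wrap t| := by rw [abs_neg, ← h1]
  · calc |wrap t| = |wrap (-(-t))| := by rw [neg_neg]
      _ ≤ |(-(-t)) + 2*Real.pi*((-K2 : ℤ):ℝ)| := abs_wrap_le _ _
      _ = |-((-t) + 2*Real.pi*(K2:ℝ))| := by push_cast; ring_nf
      _ = |wrap (-t)| := by rw [abs_neg, ← h2]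

lemma wrap_zero : wrap 0 = 0 := by
  have hpi := Real.pi_pos
  unfold wrap
  rw [zero_add, Int.floor_eq_zero_iff.mpr]
  · simp
  · constructor
    · positivity
    · rw [div_lt_one (by linarith)]; linarith

lemma sqrt_sum_sq_add {ι : Type*} [Fintype ι] (u v : ι → ℝ) :
    Real.sqrt (∑ i, (u i + v i)^2) ≤ Real.sqrt (∑ i, (u i)^2) + Real.sqrt (∑ i, (v i)^2) := by
  have h := norm_add_le (WithLp.toLp 2 u : EuclideanSpace ℝ ι) (WithLp.toLp 2 v)
  simpa [EuclideanSpace.norm_eq, Real.norm_eq_abs, sq_abs] using h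

lemma sqrt_sum_sq_mono {ι : Type*} [Fintype ι] (u v : ι → ℝ) (h : ∀ i, |u i| ≤ v i) :
    Real.sqrt (∑ i, (u i)^2) ≤ Real.sqrt (∑ i, (v i)^2) := by
  apply Real.sqrt_le_sqrt
  apply Finset.sum_le_sum
  intro i _
  calc (u i)^2 = |u i|^2 := (sq_abs _).symm
    _ ≤ (v i)^2 := by have := h i; nlinarith [abs_nonneg (u i)]

lemma sqrt_add_le' (a b : ℝ) (ha : 0 ≤ a) (hb : 0 ≤ b) :
    Real.sqrt (a + b) ≤ Real.sqrt a + Real.sqrt b := by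
  have h : a + b ≤ (Real.sqrt a + Real.sqrt b)^2 := by
    nlinarith [Real.sq_sqrt ha, Real.sq_sqrt hb, Real.sqrt_nonneg a, Real.sqrt_nonneg b,
      mul_nonneg (Real.sqrt_nonneg a) (Real.sqrt_nonneg b)]
  calc Real.sqrt (a+b) ≤ Real.sqrt ((Real.sqrt a + Real.sqrt b)^2) := Real.sqrt_le_sqrt h
    _ = _ := Real.sqrt_sq (by positivity)

lemma dXm_nonneg {m n : ℕ} (x y : Pt m n) : 0 ≤ dXm x y := Real.sqrt_nonneg _

lemma dXm_symm {m n : ℕ} (x y : Pt m n) : dXm x y = dXm y x := by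
  unfold dXm
  congr 1
  apply Finset.sum_congr rfl
  intro i _
  have h := abs_wrap_neg (x.1 i - y.1 i)
  rw [neg_sub] at h
  calc (wrap (x.1 i - y.1 i))^2 = |wrap (x.1 i - y.1 i)|^2 := (sq_abs _).symm
    _ = |wrap (y.1 i - x.1 i)|^2 := by rw [h]
    _ = _ := sq_abs _

lemma dXm_triangle {m n : ℕ} (x y z : Pt m n) : dXm x z ≤ dXm x y + dXm y z := by
  unfold dXm
  calc Real.sqrt (∑ i, (wrap (x.1 i - z.1 i))^2)
      ≤ Real.sqrt (∑ i, (|wrap (x.1 i - y.1 i)| + |wrap (y.1 i - z.1 i)|)^2) := by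
        apply sqrt_sum_sq_mono
        intro i
        calc |wrap (x.1 i - z.1 i)| = |wrap ((x.1 i - y.1 i) + (y.1 i - z.1 i))| := by ring_nf
          _ ≤ _ := abs_wrap_add _ _
    _ ≤ Real.sqrt (∑ i, |wrap (x.1 i - y.1 i)|^2) + Real.sqrt (∑ i, |wrap (y.1 i - z.1 i)|^2) :=
        sqrt_sum_sq_add _ _
    _ = _ := by simp [sq_abs]

lemma dXm_congr1 {m n : ℕ} (a b c d : Pt m n) (h1 : a.1 = b.1) (h2 : c.1 = d.1) :
    dXm a c = dXm b d := by unfold dXm; rw [h1, h2]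

/-- The cyclic part of `Dw`. -/
def Acyc {m n : ℕ} {d : ℕ} (w : Fin d → ℝ) (x : Fin d → Pt m n) : ℝ :=
  sInf {r : ℝ | ∃ k : Fin m → Fin d → ℤ,
        r = ∑ i, (∑ j, ((x j).1 i + 2 * Real.pi * (k i j : ℝ)) * w j) ^ 2}

lemma Dw_eq {m n d : ℕ} (w : Fin d → ℝ) (x : Fin d → Pt m n) :
    Dw d w x = Real.sqrt (Acyc w x + ∑ i, (∑ j, (x j).2 i * w j) ^ 2) := rfl

lemma Acyc_set_nonempty {m n d : ℕ} (w : Fin d → ℝ) (x : Fin d → Pt m n) :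
    {r : ℝ | ∃ k : Fin m → Fin d → ℤ,
        r = ∑ i, (∑ j, ((x j).1 i + 2 * Real.pi * (k i j : ℝ)) * w j) ^ 2}.Nonempty :=
  ⟨_, fun _ _ => 0, rfl⟩

lemma Acyc_bddBelow {m n d : ℕ} (w : Fin d → ℝ) (x : Fin d → Pt m n) :
    BddBelow {r : ℝ | ∃ k : Fin m → Fin d → ℤ,
        r = ∑ i, (∑ j, ((x j).1 i + 2 * Real.pi * (k i j : ℝ)) * w j) ^ 2} := by
  refine ⟨0, fun r hr => ?_⟩
  obtain ⟨k, rfl⟩ := hr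
  positivity

lemma Acyc_nonneg {m n d : ℕ} (w : Fin d → ℝ) (x : Fin d → Pt m n) : 0 ≤ Acyc w x := by
  apply le_csInf (Acyc_set_nonempty w x)
  rintro r ⟨k, rfl⟩
  positivity

lemma Acyc_le {m n d : ℕ} (w : Fin d → ℝ) (x : Fin d → Pt m n) (k : Fin m → Fin d → ℤ) :
    Acyc w x ≤ ∑ i, (∑ j, ((x j).1 i + 2 * Real.pi * (k i j : ℝ)) * w j) ^ 2 :=
  csInf_le (Acyc_bddBelow w x) ⟨k, rfl⟩

lemma Dw_le_sqrtAcyc_add {m n d : ℕ} (w : Fin d → ℝ) (xt yt : Fin d → Pt m n)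
    (h : ∀ j, (yt j).2 = (xt j).2) :
    Dw d w yt ≤ Real.sqrt (Acyc w yt) + Dw d w xt := by
  rw [Dw_eq, Dw_eq]
  have hE : (∑ i, (∑ j, (yt j).2 i * w j) ^ 2) = ∑ i, (∑ j, (xt j).2 i * w j) ^ 2 := by
    apply Finset.sum_congr rfl; intro i _; congr 1
    apply Finset.sum_congr rfl; intro j _; rw [h j]
  rw [hE]
  have hEn : (0:ℝ) ≤ ∑ i, (∑ j, (xt j).2 i * w j) ^ 2 := by positivity
  calc Real.sqrt (Acyc w yt + ∑ i, (∑ j, (xt j).2 i * w j) ^ 2)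
      ≤ Real.sqrt (Acyc w yt) + Real.sqrt (∑ i, (∑ j, (xt j).2 i * w j) ^ 2) :=
        sqrt_add_le' _ _ (Acyc_nonneg w yt) hEn
    _ ≤ _ := by
        gcongr
        linarith [Acyc_nonneg w xt]

end Aux
section Aux2
open Real Finset

lemma sqrt_acyc_D1 {m n : ℕ} (a b : Pt m n) :
    Real.sqrt (Acyc ![(-1:ℝ),1] ![a,b]) ≤ dXm a b := by
  have hK := fun i : Fin m => wrap_spec (b.1 i - a.1 i)
  choose K hK using hK
  have h1 : Acyc ![(-1:ℝ),1] ![a,b] ≤ ∑ i, (wrap (b.1 i - a.1 i))^2 := by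
    refine (Acyc_le ![(-1:ℝ),1] ![a,b] (fun i => ![0, K i])).trans (le_of_eq ?_)
    apply Finset.sum_congr rfl
    intro i _
    rw [Fin.sum_univ_two]
    simp only [Matrix.cons_val_zero, Matrix.cons_val_one, Matrix.head_cons]
    rw [hK i]
    push_cast
    ring
  calc Real.sqrt (Acyc ![(-1:ℝ),1] ![a,b])
      ≤ Real.sqrt (∑ i, (wrap (b.1 i - a.1 i))^2) := Real.sqrt_le_sqrt h1
    _ = dXm b a := rfl
    _ = dXm a b := dXm_symm b a

lemma sqrt_acyc_D2 {m n : ℕ} (a b c : Pt m n) :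
    Real.sqrt (Acyc ![(1:ℝ),-2,1] ![a,b,c]) ≤ dXm a b + dXm c b := by
  have hK1 := fun i : Fin m => wrap_spec (a.1 i - b.1 i)
  choose K1 hK1 using hK1
  have hK2 := fun i : Fin m => wrap_spec (c.1 i - b.1 i)
  choose K2 hK2 using hK2
  have h1 : Acyc ![(1:ℝ),-2,1] ![a,b,c]
      ≤ ∑ i, (wrap (a.1 i - b.1 i) + wrap (c.1 i - b.1 i))^2 := by
    refine (Acyc_le ![(1:ℝ),-2,1] ![a,b,c] (fun i => ![K1 i, 0, K2 i])).trans (le_of_eq ?_)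
    apply Finset.sum_congr rfl
    intro i _
    rw [Fin.sum_univ_three]
    simp only [Matrix.cons_val_zero, Matrix.cons_val_one, Matrix.head_cons,
      Matrix.cons_val_two, Matrix.tail_cons]
    rw [hK1 i, hK2 i]
    push_cast
    ring
  calc Real.sqrt (Acyc ![(1:ℝ),-2,1] ![a,b,c])
      ≤ Real.sqrt (∑ i, (wrap (a.1 i - b.1 i) + wrap (c.1 i - b.1 i))^2) :=
        Real.sqrt_le_sqrt h1
    _ ≤ Real.sqrt (∑ i, (wrap (a.1 i - b.1 i))^2)
        + Real.sqrt (∑ i, (wrap (c.1 i - b.1 i))^2) := sqrt_sum_sq_add _ _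
    _ = dXm a b + dXm c b := rfl

lemma sqrt_acyc_D11 {m n : ℕ} (a b c d : Pt m n) :
    Real.sqrt (Acyc ![(-1:ℝ),1,1,-1] ![a,b,c,d]) ≤ dXm a b + dXm c d := by
  have hK1 := fun i : Fin m => wrap_spec (b.1 i - a.1 i)
  choose K1 hK1 using hK1
  have hK2 := fun i : Fin m => wrap_spec (c.1 i - d.1 i)
  choose K2 hK2 using hK2
  have h1 : Acyc ![(-1:ℝ),1,1,-1] ![a,b,c,d]
      ≤ ∑ i, (wrap (b.1 i - a.1 i) + wrap (c.1 i - d.1 i))^2 := by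
    refine (Acyc_le ![(-1:ℝ),1,1,-1] ![a,b,c,d]
      (fun i => ![0, K1 i, K2 i, 0])).trans (le_of_eq ?_)
    apply Finset.sum_congr rfl
    intro i _
    rw [Fin.sum_univ_four]
    simp only [Matrix.cons_val_zero, Matrix.cons_val_one, Matrix.head_cons,
      Matrix.cons_val_two, Matrix.tail_cons, Matrix.cons_val_three]
    rw [hK1 i, hK2 i]
    push_cast
    ring
  calc Real.sqrt (Acyc ![(-1:ℝ),1,1,-1] ![a,b,c,d])
      ≤ Real.sqrt (∑ i, (wrap (b.1 i - a.1 i) + wrap (c.1 i - d.1 i))^2) :=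
        Real.sqrt_le_sqrt h1
    _ ≤ Real.sqrt (∑ i, (wrap (b.1 i - a.1 i))^2)
        + Real.sqrt (∑ i, (wrap (c.1 i - d.1 i))^2) := sqrt_sum_sq_add _ _
    _ = dXm b a + dXm c d := rfl
    _ = dXm a b + dXm c d := by rw [dXm_symm b a]

lemma sum_shift_le {N M : ℕ} (s : Grid N M → ℝ) (hs : ∀ q, 0 ≤ s q)
    (cond : Grid N M → Prop) [DecidablePred cond] (σ : Grid N M → Grid N M)
    (hσ : ∀ p q, cond p → cond q → σ p = σ q → p = q) :
    ∑ p : Grid N M, (if cond p then s (σ p) else 0) ≤ ∑ q : Grid N M, s q := by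
  rw [Finset.sum_ite, Finset.sum_const_zero, add_zero]
  rw [← Finset.sum_image (f := s) (g := σ)
    (fun p hp q hq => hσ p q (Finset.mem_filter.mp hp).2 (Finset.mem_filter.mp hq).2)]
  exact Finset.sum_le_sum_of_subset_of_nonneg (Finset.subset_univ _) (fun q _ _ => hs q)

lemma le_s {m n N M : ℕ} (F : Grid N M → Pt m n) (p q : Grid N M) (h8 : eight p q) :
    dXm (F p) (F q) ≤ ⨆ r : Grid N M, if eight p r then dXm (F p) (F r) else 0 := by
  have hb : BddAbove (Set.range fun r : Grid N M =>
      if eight p r then dXm (F p) (F r) else 0) :=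
    Set.Finite.bddAbove (Set.finite_range _)
  have h := le_ciSup hb q
  rwa [if_pos h8] at h

lemma s_nonneg {m n N M : ℕ} (F : Grid N M → Pt m n) (p : Grid N M) :
    0 ≤ ⨆ r : Grid N M, if eight p r then dXm (F p) (F r) else 0 := by
  apply Real.iSup_nonneg
  intro r
  split
  · exact dXm_nonneg _ _
  · exact le_refl 0

lemma eight_mk {N M : ℕ} (p q : Grid N M)
    (hne : (p.1 : ℕ) ≠ (q.1 : ℕ) ∨ (p.2 : ℕ) ≠ (q.2 : ℕ))
    (h1 : ((p.1 : ℕ) : ℤ) - ((q.1 : ℕ) : ℤ) ≤ 1) (h1' : ((q.1 : ℕ) : ℤ) - ((p.1 : ℕ) : ℤ) ≤ 1)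
    (h2 : ((p.2 : ℕ) : ℤ) - ((q.2 : ℕ) : ℤ) ≤ 1) (h2' : ((q.2 : ℕ) : ℤ) - ((p.2 : ℕ) : ℤ) ≤ 1) :
    eight p q := by
  refine ⟨?_, abs_sub_le_iff.mpr ⟨h1, h1'⟩, abs_sub_le_iff.mpr ⟨h2, h2'⟩⟩
  intro heq
  rcases hne with h | h <;> exact h (by rw [heq])

end Aux2
section Aux3
open Real Finset

/-- local oscillation of `F` at `p` over eight-neighbors. -/
def sloc {m n N M : ℕ} (F : Grid N M → Pt m n) (p : Grid N M) : ℝ :=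
  ⨆ r : Grid N M, if eight p r then dXm (F p) (F r) else 0

lemma le_sloc {m n N M : ℕ} (F : Grid N M → Pt m n) (p q : Grid N M) (h8 : eight p q) :
    dXm (F p) (F q) ≤ sloc F p := le_s F p q h8

lemma sloc_nonneg {m n N M : ℕ} (F : Grid N M → Pt m n) (p : Grid N M) :
    0 ≤ sloc F p := s_nonneg F p

lemma d1full_eq_sloc {m n N M : ℕ} (F : Grid N M → Pt m n) :
    d1full F = ∑ p : Grid N M, sloc F p := rfl

end Aux3
section Aux4
open Real Finset

lemma D1_pert {m n : ℕ} (a b a' b' : Pt m n) (h1 : a'.2 = a.2) (h2 : b'.2 = b.2) :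
    D1 a' b' ≤ dXm a' b' + D1 a b := by
  have hD := Dw_le_sqrtAcyc_add ![(-1:ℝ),1] ![a, b] ![a', b']
    (fun j => by fin_cases j <;> simp [h1, h2])
  have hA := sqrt_acyc_D1 a' b'
  unfold D1
  linarith

lemma D2_pert {m n : ℕ} (a b c a' b' c' : Pt m n)
    (h1 : a'.2 = a.2) (h2 : b'.2 = b.2) (h3 : c'.2 = c.2) :
    D2 a' b' c' ≤ dXm a' b' + dXm c' b' + D2 a b c := by
  have hD := Dw_le_sqrtAcyc_add ![(1:ℝ),-2,1] ![a, b, c] ![a', b', c']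
    (fun j => by fin_cases j <;> simp [h1, h2, h3])
  have hA := sqrt_acyc_D2 a' b' c'
  unfold D2
  linarith

lemma D11_pert {m n : ℕ} (a b c d a' b' c' d' : Pt m n)
    (h1 : a'.2 = a.2) (h2 : b'.2 = b.2) (h3 : c'.2 = c.2) (h4 : d'.2 = d.2) :
    D11 a' b' c' d' ≤ dXm a' b' + dXm c' d' + D11 a b c d := by
  have hD := Dw_le_sqrtAcyc_add ![(-1:ℝ),1,1,-1] ![a, b, c, d] ![a', b', c', d']
    (fun j => by fin_cases j <;> simp [h1, h2, h3, h4])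
  have hA := sqrt_acyc_D11 a' b' c' d'
  unfold D11
  linarith

lemma block_D1 {m n N M : ℕ} (F x y : Grid N M → Pt m n)
    (hy : ∀ p, y p = ((F p).1, (x p).2))
    (cond : Grid N M → Prop) [DecidablePred cond]
    (q1 q2 : ∀ p : Grid N M, cond p → Grid N M)
    (h8 : ∀ p h, eight (q1 p h) (q2 p h))
    (σ : Grid N M → Grid N M)
    (hσ : ∀ p h, σ p = q1 p h)
    (hinj : ∀ p q, cond p → cond q → σ p = σ q → p = q) :
    (∑ p : Grid N M, if h : cond p then D1 (y (q1 p h)) (y (q2 p h)) else 0)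
    ≤ (∑ p : Grid N M, if h : cond p then D1 (x (q1 p h)) (x (q2 p h)) else 0)
      + ∑ p : Grid N M, sloc F p := by
  have hstep : ∀ p : Grid N M,
      (if h : cond p then D1 (y (q1 p h)) (y (q2 p h)) else 0)
      ≤ (if h : cond p then D1 (x (q1 p h)) (x (q2 p h)) else 0)
        + (if cond p then sloc F (σ p) else 0) := by
    intro p
    by_cases h : cond p
    · rw [dif_pos h, dif_pos h, if_pos h, hσ p h]
      have hp := D1_pert (x (q1 p h)) (x (q2 p h)) (y (q1 p h)) (y (q2 p h))
        (by rw [hy]) (by rw [hy])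
      have hyF : dXm (y (q1 p h)) (y (q2 p h)) = dXm (F (q1 p h)) (F (q2 p h)) :=
        dXm_congr1 _ _ _ _ (by rw [hy]) (by rw [hy])
      rw [hyF] at hp
      have hsl := le_sloc F _ _ (h8 p h)
      linarith
    · rw [dif_neg h, dif_neg h, if_neg h]; norm_num
  calc (∑ p : Grid N M, if h : cond p then D1 (y (q1 p h)) (y (q2 p h)) else 0)
      ≤ ∑ p : Grid N M, ((if h : cond p then D1 (x (q1 p h)) (x (q2 p h)) else 0)
          + (if cond p then sloc F (σ p) else 0)) := Finset.sum_le_sum fun p _ => hstep p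
    _ = (∑ p : Grid N M, if h : cond p then D1 (x (q1 p h)) (x (q2 p h)) else 0)
        + ∑ p : Grid N M, (if cond p then sloc F (σ p) else 0) := Finset.sum_add_distrib
    _ ≤ _ := add_le_add_right (sum_shift_le (sloc F) (sloc_nonneg F) cond σ hinj) _

lemma block_D2 {m n N M : ℕ} (F x y : Grid N M → Pt m n)
    (hy : ∀ p, y p = ((F p).1, (x p).2))
    (cond : Grid N M → Prop) [DecidablePred cond]
    (q1 q2 q3 : ∀ p : Grid N M, cond p → Grid N M)
    (h8a : ∀ p h, eight (q1 p h) (q2 p h))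
    (h8b : ∀ p h, eight (q3 p h) (q2 p h))
    (σa σb : Grid N M → Grid N M)
    (hσa : ∀ p h, σa p = q1 p h) (hσb : ∀ p h, σb p = q3 p h)
    (hinja : ∀ p q, cond p → cond q → σa p = σa q → p = q)
    (hinjb : ∀ p q, cond p → cond q → σb p = σb q → p = q) :
    (∑ p : Grid N M, if h : cond p then D2 (y (q1 p h)) (y (q2 p h)) (y (q3 p h)) else 0)
    ≤ (∑ p : Grid N M, if h : cond p then D2 (x (q1 p h)) (x (q2 p h)) (x (q3 p h)) else 0)
      + 2 * ∑ p : Grid N M, sloc F p := by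
  have hstep : ∀ p : Grid N M,
      (if h : cond p then D2 (y (q1 p h)) (y (q2 p h)) (y (q3 p h)) else 0)
      ≤ (if h : cond p then D2 (x (q1 p h)) (x (q2 p h)) (x (q3 p h)) else 0)
        + ((if cond p then sloc F (σa p) else 0) + (if cond p then sloc F (σb p) else 0)) := by
    intro p
    by_cases h : cond p
    · rw [dif_pos h, dif_pos h, if_pos h, if_pos h, hσa p h, hσb p h]
      have hp := D2_pert (x (q1 p h)) (x (q2 p h)) (x (q3 p h))
        (y (q1 p h)) (y (q2 p h)) (y (q3 p h)) (by rw [hy]) (by rw [hy]) (by rw [hy])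
      have hyF1 : dXm (y (q1 p h)) (y (q2 p h)) = dXm (F (q1 p h)) (F (q2 p h)) :=
        dXm_congr1 _ _ _ _ (by rw [hy]) (by rw [hy])
      have hyF2 : dXm (y (q3 p h)) (y (q2 p h)) = dXm (F (q3 p h)) (F (q2 p h)) :=
        dXm_congr1 _ _ _ _ (by rw [hy]) (by rw [hy])
      rw [hyF1, hyF2] at hp
      have hsla := le_sloc F _ _ (h8a p h)
      have hslb := le_sloc F _ _ (h8b p h)
      linarith
    · rw [dif_neg h, dif_neg h, if_neg h, if_neg h]; norm_num
  calc (∑ p : Grid N M, if h : cond p then D2 (y (q1 p h)) (y (q2 p h)) (y (q3 p h)) else 0)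
      ≤ ∑ p : Grid N M, ((if h : cond p then D2 (x (q1 p h)) (x (q2 p h)) (x (q3 p h)) else 0)
          + ((if cond p then sloc F (σa p) else 0) + (if cond p then sloc F (σb p) else 0))) :=
        Finset.sum_le_sum fun p _ => hstep p
    _ = (∑ p : Grid N M, if h : cond p then D2 (x (q1 p h)) (x (q2 p h)) (x (q3 p h)) else 0)
        + ((∑ p : Grid N M, (if cond p then sloc F (σa p) else 0))
          + ∑ p : Grid N M, (if cond p then sloc F (σb p) else 0)) := by
        rw [Finset.sum_add_distrib, Finset.sum_add_distrib]
    _ ≤ _ := by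
        have ha := sum_shift_le (sloc F) (sloc_nonneg F) cond σa hinja
        have hb := sum_shift_le (sloc F) (sloc_nonneg F) cond σb hinjb
        linarith

lemma block_D11 {m n N M : ℕ} (F x y : Grid N M → Pt m n)
    (hy : ∀ p, y p = ((F p).1, (x p).2))
    (cond : Grid N M → Prop) [DecidablePred cond]
    (q1 q2 q3 q4 : ∀ p : Grid N M, cond p → Grid N M)
    (h8a : ∀ p h, eight (q1 p h) (q2 p h))
    (h8b : ∀ p h, eight (q3 p h) (q4 p h))
    (σa σb : Grid N M → Grid N M)
    (hσa : ∀ p h, σa p = q1 p h) (hσb : ∀ p h, σb p = q3 p h)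
    (hinja : ∀ p q, cond p → cond q → σa p = σa q → p = q)
    (hinjb : ∀ p q, cond p → cond q → σb p = σb q → p = q) :
    (∑ p : Grid N M,
      if h : cond p then D11 (y (q1 p h)) (y (q2 p h)) (y (q3 p h)) (y (q4 p h)) else 0)
    ≤ (∑ p : Grid N M,
        if h : cond p then D11 (x (q1 p h)) (x (q2 p h)) (x (q3 p h)) (x (q4 p h)) else 0)
      + 2 * ∑ p : Grid N M, sloc F p := by
  have hstep : ∀ p : Grid N M,
      (if h : cond p then D11 (y (q1 p h)) (y (q2 p h)) (y (q3 p h)) (y (q4 p h)) else 0)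
      ≤ (if h : cond p then D11 (x (q1 p h)) (x (q2 p h)) (x (q3 p h)) (x (q4 p h)) else 0)
        + ((if cond p then sloc F (σa p) else 0) + (if cond p then sloc F (σb p) else 0)) := by
    intro p
    by_cases h : cond p
    · rw [dif_pos h, dif_pos h, if_pos h, if_pos h, hσa p h, hσb p h]
      have hp := D11_pert (x (q1 p h)) (x (q2 p h)) (x (q3 p h)) (x (q4 p h))
        (y (q1 p h)) (y (q2 p h)) (y (q3 p h)) (y (q4 p h))
        (by rw [hy]) (by rw [hy]) (by rw [hy]) (by rw [hy])
      have hyF1 : dXm (y (q1 p h)) (y (q2 p h)) = dXm (F (q1 p h)) (F (q2 p h)) :=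
        dXm_congr1 _ _ _ _ (by rw [hy]) (by rw [hy])
      have hyF2 : dXm (y (q3 p h)) (y (q4 p h)) = dXm (F (q3 p h)) (F (q4 p h)) :=
        dXm_congr1 _ _ _ _ (by rw [hy]) (by rw [hy])
      rw [hyF1, hyF2] at hp
      have hsla := le_sloc F _ _ (h8a p h)
      have hslb := le_sloc F _ _ (h8b p h)
      linarith
    · rw [dif_neg h, dif_neg h, if_neg h, if_neg h]; norm_num
  calc (∑ p : Grid N M,
        if h : cond p then D11 (y (q1 p h)) (y (q2 p h)) (y (q3 p h)) (y (q4 p h)) else 0)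
      ≤ ∑ p : Grid N M,
          ((if h : cond p then D11 (x (q1 p h)) (x (q2 p h)) (x (q3 p h)) (x (q4 p h)) else 0)
          + ((if cond p then sloc F (σa p) else 0) + (if cond p then sloc F (σb p) else 0))) :=
        Finset.sum_le_sum fun p _ => hstep p
    _ = (∑ p : Grid N M,
          if h : cond p then D11 (x (q1 p h)) (x (q2 p h)) (x (q3 p h)) (x (q4 p h)) else 0)
        + ((∑ p : Grid N M, (if cond p then sloc F (σa p) else 0))
          + ∑ p : Grid N M, (if cond p then sloc F (σb p) else 0)) := by
        rw [Finset.sum_add_distrib, Finset.sum_add_distrib]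
    _ ≤ _ := by
        have ha := sum_shift_le (sloc F) (sloc_nonneg F) cond σa hinja
        have hb := sum_shift_le (sloc F) (sloc_nonneg F) cond σb hinjb
        linarith

end Aux4
set_option maxHeartbeats 2000000 in
/-- **Lemma 4.4.** If the data `f` on `Ω^C` satisfies `d^Ω_∞(f) < ε/(4B'_ν(Ω))` and the
model parameters satisfy `d₁^Ω(f) ≤ ε²/(8²·20·p·C_ν(Ω)·B'_ν(Ω)²)`, then every minimizer
`x*` of the inpainting functional `J_Ω` (noiseless constrained model or noisy model)
satisfies `e_∞(x*, f) ≤ ε`. -/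
theorem inpainting_minimizer_eSup_bound
    (m n N M : ℕ)
    (Om : Finset (Grid N M)) (Nbh : Grid N M → Finset (Grid N M))
    (hcover : ∀ p : Grid N M, ∃ q ∈ Omᶜ, p ∈ Nbh q)
    (nu : Grid N M → Grid N M)
    (hnu1 : ∀ p, nu p ∈ Omᶜ) (hnu2 : ∀ p ∈ Omᶜ, nu p = p)
    (a1 a2 a3 a4 b1 b2 g : ℝ)
    (ha1 : 0 ≤ a1) (ha2 : 0 ≤ a2) (ha3 : 0 ≤ a3) (ha4 : 0 ≤ a4)
    (hb1 : 0 ≤ b1) (hb2 : 0 ≤ b2) (hg : 0 ≤ g)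
    (f : Grid N M → Pt m n)
    (hf : ∀ p ∈ Omᶜ, ∀ i, (f p).1 i ∈ Set.Ico (-Real.pi) Real.pi)
    (eps : ℝ) (heps : 0 < eps)
    (B' C : ℝ) (hB'1 : 1 ≤ B')
    (hB' : ∀ gd : Grid N M → Pt m n,
      (∀ p ∈ Omᶜ, ∀ i, (gd p).1 i ∈ Set.Ico (-Real.pi) Real.pi) →
      ∀ u, MinNoiseless N M Om gd a1 a2 a3 a4 b1 b2 g u →
        ∀ p, dXm (u p) (gd (nu p)) ≤ B' * dOmSup Om Nbh gd)
    (hC : ∀ gd : Grid N M → Pt m n,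
      (∀ p ∈ Omᶜ, ∀ i, (gd p).1 i ∈ Set.Ico (-Real.pi) Real.pi) →
      d1full (fun p => gd (nu p)) ≤ C * d1Om Om gd)
    (hfar : dOmSup Om Nbh f < eps / (4 * B'))
    (pmax : ℝ)
    (hpmax : pmax = max a1 (max a2 (max a3 (max a4 (max b1 (max b2 g))))))
    (hsmall : d1Om Om f ≤ eps ^ 2 / (8 ^ 2 * 20 * pmax * C * B' ^ 2)) :
    ∀ xstar : Grid N M → Pt m n,
      (MinNoiseless N M Om f a1 a2 a3 a4 b1 b2 g xstar ∨
        MinNoisy N M Om f a1 a2 a3 a4 b1 b2 g xstar) →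
      eSup nu xstar f ≤ eps := by
  intro x hx
  have hpi := Real.pi_pos
  have hB'pos : (0:ℝ) < B' := lt_of_lt_of_le one_pos hB'1
  have hdOmf_nonneg : 0 ≤ dOmSup Om Nbh f := by
    apply Real.iSup_nonneg
    intro pq
    split
    · exact dXm_nonneg _ _
    · exact le_rfl
  have hBdOm : B' * dOmSup Om Nbh f ≤ eps / 4 := by
    rw [lt_div_iff₀ (by positivity : (0:ℝ) < 4*B')] at hfar
    nlinarith
  rcases hx with hmin | hmin
  · -- noiseless case
    have hb := hB' f hf x hmin
    apply Real.iSup_le _ heps.le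
    intro p
    calc dXm (x p) (f (nu p)) ≤ B' * dOmSup Om Nbh f := hb p
      _ ≤ eps / 4 := hBdOm
      _ ≤ eps := by linarith
  · -- noisy case
    obtain ⟨hxX, hxmin⟩ := hmin
    set F : Grid N M → Pt m n := fun p => f (nu p) with hFdef
    set y : Grid N M → Pt m n := fun p => ((F p).1, (x p).2) with hYdef
    have hy : ∀ p, y p = ((F p).1, (x p).2) := fun p => by rw [hYdef]
    have hyX : inXimg y := by
      intro p i
      rw [hy p]
      exact hf (nu p) (hnu1 p) i
    have hS0 : (0:ℝ) ≤ ∑ p : Grid N M, sloc F p :=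
      Finset.sum_nonneg fun p _ => sloc_nonneg F p
    -- pmax bounds
    have hpa1 : a1 ≤ pmax := by simp [hpmax, le_max_iff]
    have hpa2 : a2 ≤ pmax := by simp [hpmax, le_max_iff]
    have hpa3 : a3 ≤ pmax := by simp [hpmax, le_max_iff]
    have hpa4 : a4 ≤ pmax := by simp [hpmax, le_max_iff]
    have hpb1 : b1 ≤ pmax := by simp [hpmax, le_max_iff]
    have hpb2 : b2 ≤ pmax := by simp [hpmax, le_max_iff]
    have hpg : g ≤ pmax := by simp [hpmax, le_max_iff]
    have hpm0 : 0 ≤ pmax := le_trans ha1 hpa1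
    have hsqrt2 : (1:ℝ) ≤ Real.sqrt 2 := by
      rw [show (1:ℝ) = Real.sqrt 1 by simp]
      exact Real.sqrt_le_sqrt (by norm_num)
    -- the seven block estimates
    have hB1 : (∑ p : Grid N M,
        if h : (p.1 : ℕ) + 1 < N then D1 (y p) (y (⟨(p.1 : ℕ) + 1, h⟩, p.2)) else 0)
        ≤ (∑ p : Grid N M,
          if h : (p.1 : ℕ) + 1 < N then D1 (x p) (x (⟨(p.1 : ℕ) + 1, h⟩, p.2)) else 0)
          + ∑ p : Grid N M, sloc F p :=
      block_D1 F x y hy (fun p => (p.1 : ℕ) + 1 < N)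
        (fun p _ => p) (fun p h => (⟨(p.1 : ℕ) + 1, h⟩, p.2))
        (fun p h => by refine eight_mk _ _ ?_ ?_ ?_ ?_ ?_ <;> simp <;> omega)
        id (fun p h => rfl) (fun p q _ _ h => h)
    have hB2 : (∑ p : Grid N M,
        if h : (p.2 : ℕ) + 1 < M then D1 (y p) (y (p.1, ⟨(p.2 : ℕ) + 1, h⟩)) else 0)
        ≤ (∑ p : Grid N M,
          if h : (p.2 : ℕ) + 1 < M then D1 (x p) (x (p.1, ⟨(p.2 : ℕ) + 1, h⟩)) else 0)
          + ∑ p : Grid N M, sloc F p :=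
      block_D1 F x y hy (fun p => (p.2 : ℕ) + 1 < M)
        (fun p _ => p) (fun p h => (p.1, ⟨(p.2 : ℕ) + 1, h⟩))
        (fun p h => by refine eight_mk _ _ ?_ ?_ ?_ ?_ ?_ <;> simp <;> omega)
        id (fun p h => rfl) (fun p q _ _ h => h)
    have hB3 : (∑ p : Grid N M,
        if h : (p.1 : ℕ) + 1 < N ∧ (p.2 : ℕ) + 1 < M then
          D1 (y p) (y (⟨(p.1 : ℕ) + 1, h.1⟩, ⟨(p.2 : ℕ) + 1, h.2⟩)) else 0)
        ≤ (∑ p : Grid N M,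
          if h : (p.1 : ℕ) + 1 < N ∧ (p.2 : ℕ) + 1 < M then
            D1 (x p) (x (⟨(p.1 : ℕ) + 1, h.1⟩, ⟨(p.2 : ℕ) + 1, h.2⟩)) else 0)
          + ∑ p : Grid N M, sloc F p :=
      block_D1 F x y hy (fun p => (p.1 : ℕ) + 1 < N ∧ (p.2 : ℕ) + 1 < M)
        (fun p _ => p) (fun p h => (⟨(p.1 : ℕ) + 1, h.1⟩, ⟨(p.2 : ℕ) + 1, h.2⟩))
        (fun p h => by refine eight_mk _ _ ?_ ?_ ?_ ?_ ?_ <;> simp <;> omega)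
        id (fun p h => rfl) (fun p q _ _ h => h)
    have hB4 : (∑ p : Grid N M,
        if h : (p.1 : ℕ) + 1 < N ∧ (p.2 : ℕ) + 1 < M then
          D1 (y (p.1, ⟨(p.2 : ℕ) + 1, h.2⟩)) (y (⟨(p.1 : ℕ) + 1, h.1⟩, p.2)) else 0)
        ≤ (∑ p : Grid N M,
          if h : (p.1 : ℕ) + 1 < N ∧ (p.2 : ℕ) + 1 < M then
            D1 (x (p.1, ⟨(p.2 : ℕ) + 1, h.2⟩)) (x (⟨(p.1 : ℕ) + 1, h.1⟩, p.2)) else 0)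
          + ∑ p : Grid N M, sloc F p :=
      block_D1 F x y hy (fun p => (p.1 : ℕ) + 1 < N ∧ (p.2 : ℕ) + 1 < M)
        (fun p h => (p.1, ⟨(p.2 : ℕ) + 1, h.2⟩)) (fun p h => (⟨(p.1 : ℕ) + 1, h.1⟩, p.2))
        (fun p h => by refine eight_mk _ _ ?_ ?_ ?_ ?_ ?_ <;> simp <;> omega)
        (fun p => if hh : (p.2 : ℕ) + 1 < M then (p.1, (⟨(p.2 : ℕ) + 1, hh⟩ : Fin M)) else p)
        (fun p h => dif_pos h.2)
        (fun p q hp hq heq => by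
          simp only [dif_pos hp.2, dif_pos hq.2, Prod.mk.injEq, Fin.mk.injEq] at heq
          exact Prod.ext_iff.mpr ⟨heq.1, Fin.ext (by omega)⟩)
    have hB5 : (∑ p : Grid N M,
        if h : (p.1 : ℕ) + 2 < N then
          D2 (y p) (y (⟨(p.1 : ℕ) + 1, by omega⟩, p.2)) (y (⟨(p.1 : ℕ) + 2, h⟩, p.2))
        else 0)
        ≤ (∑ p : Grid N M,
          if h : (p.1 : ℕ) + 2 < N then
            D2 (x p) (x (⟨(p.1 : ℕ) + 1, by omega⟩, p.2)) (x (⟨(p.1 : ℕ) + 2, h⟩, p.2))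
          else 0)
          + 2 * ∑ p : Grid N M, sloc F p :=
      block_D2 F x y hy (fun p => (p.1 : ℕ) + 2 < N)
        (fun p _ => p) (fun p h => (⟨(p.1 : ℕ) + 1, by omega⟩, p.2))
        (fun p h => (⟨(p.1 : ℕ) + 2, h⟩, p.2))
        (fun p h => by refine eight_mk _ _ ?_ ?_ ?_ ?_ ?_ <;> simp <;> omega)
        (fun p h => by refine eight_mk _ _ ?_ ?_ ?_ ?_ ?_ <;> simp <;> omega)
        id (fun p => if hh : (p.1 : ℕ) + 2 < N then ((⟨(p.1 : ℕ) + 2, hh⟩ : Fin N), p.2) else p)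
        (fun p h => rfl) (fun p h => dif_pos h)
        (fun p q _ _ h => h)
        (fun p q hp hq heq => by
          simp only [dif_pos hp, dif_pos hq, Prod.mk.injEq, Fin.mk.injEq] at heq
          exact Prod.ext_iff.mpr ⟨Fin.ext (by omega), heq.2⟩)
    have hB6 : (∑ p : Grid N M,
        if h : (p.2 : ℕ) + 2 < M then
          D2 (y p) (y (p.1, ⟨(p.2 : ℕ) + 1, by omega⟩)) (y (p.1, ⟨(p.2 : ℕ) + 2, h⟩))
        else 0)
        ≤ (∑ p : Grid N M,
          if h : (p.2 : ℕ) + 2 < M then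
            D2 (x p) (x (p.1, ⟨(p.2 : ℕ) + 1, by omega⟩)) (x (p.1, ⟨(p.2 : ℕ) + 2, h⟩))
          else 0)
          + 2 * ∑ p : Grid N M, sloc F p :=
      block_D2 F x y hy (fun p => (p.2 : ℕ) + 2 < M)
        (fun p _ => p) (fun p h => (p.1, ⟨(p.2 : ℕ) + 1, by omega⟩))
        (fun p h => (p.1, ⟨(p.2 : ℕ) + 2, h⟩))
        (fun p h => by refine eight_mk _ _ ?_ ?_ ?_ ?_ ?_ <;> simp <;> omega)
        (fun p h => by refine eight_mk _ _ ?_ ?_ ?_ ?_ ?_ <;> simp <;> omega)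
        id (fun p => if hh : (p.2 : ℕ) + 2 < M then (p.1, (⟨(p.2 : ℕ) + 2, hh⟩ : Fin M)) else p)
        (fun p h => rfl) (fun p h => dif_pos h)
        (fun p q _ _ h => h)
        (fun p q hp hq heq => by
          simp only [dif_pos hp, dif_pos hq, Prod.mk.injEq, Fin.mk.injEq] at heq
          exact Prod.ext_iff.mpr ⟨heq.1, Fin.ext (by omega)⟩)
    have hB7 : (∑ p : Grid N M,
        if h : (p.1 : ℕ) + 1 < N ∧ (p.2 : ℕ) + 1 < M then
          D11 (y p) (y (⟨(p.1 : ℕ) + 1, h.1⟩, p.2)) (y (p.1, ⟨(p.2 : ℕ) + 1, h.2⟩))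
            (y (⟨(p.1 : ℕ) + 1, h.1⟩, ⟨(p.2 : ℕ) + 1, h.2⟩))
        else 0)
        ≤ (∑ p : Grid N M,
          if h : (p.1 : ℕ) + 1 < N ∧ (p.2 : ℕ) + 1 < M then
            D11 (x p) (x (⟨(p.1 : ℕ) + 1, h.1⟩, p.2)) (x (p.1, ⟨(p.2 : ℕ) + 1, h.2⟩))
              (x (⟨(p.1 : ℕ) + 1, h.1⟩, ⟨(p.2 : ℕ) + 1, h.2⟩))
          else 0)
          + 2 * ∑ p : Grid N M, sloc F p :=
      block_D11 F x y hy (fun p => (p.1 : ℕ) + 1 < N ∧ (p.2 : ℕ) + 1 < M)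
        (fun p _ => p) (fun p h => (⟨(p.1 : ℕ) + 1, h.1⟩, p.2))
        (fun p h => (p.1, ⟨(p.2 : ℕ) + 1, h.2⟩))
        (fun p h => (⟨(p.1 : ℕ) + 1, h.1⟩, ⟨(p.2 : ℕ) + 1, h.2⟩))
        (fun p h => by refine eight_mk _ _ ?_ ?_ ?_ ?_ ?_ <;> simp <;> omega)
        (fun p h => by refine eight_mk _ _ ?_ ?_ ?_ ?_ ?_ <;> simp <;> omega)
        id (fun p => if hh : (p.2 : ℕ) + 1 < M then (p.1, (⟨(p.2 : ℕ) + 1, hh⟩ : Fin M)) else p)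
        (fun p h => rfl) (fun p h => dif_pos h.2)
        (fun p q _ _ h => h)
        (fun p q hp hq heq => by
          simp only [dif_pos hp.2, dif_pos hq.2, Prod.mk.injEq, Fin.mk.injEq] at heq
          exact Prod.ext_iff.mpr ⟨heq.1, Fin.ext (by omega)⟩)
    -- combining: TVall y ≤ TVall x + 10 pmax S
    have hTV : TVall N M a1 a2 a3 a4 b1 b2 g y
        ≤ TVall N M a1 a2 a3 a4 b1 b2 g x + 10 * (pmax * ∑ p : Grid N M, sloc F p) := by
      unfold TVall TV1 TV2 TV11
      have m1 := mul_le_mul_of_nonneg_left hB1 ha1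
      have m2 := mul_le_mul_of_nonneg_left hB2 ha2
      have m3 := mul_le_mul_of_nonneg_left hB3 (by positivity : (0:ℝ) ≤ a3 / Real.sqrt 2)
      have m4 := mul_le_mul_of_nonneg_left hB4 (by positivity : (0:ℝ) ≤ a4 / Real.sqrt 2)
      have m5 := mul_le_mul_of_nonneg_left hB5 hb1
      have m6 := mul_le_mul_of_nonneg_left hB6 hb2
      have m7 := mul_le_mul_of_nonneg_left hB7 hg
      rw [mul_add] at m1 m2 m3 m4 m5 m6 m7
      have c1 := mul_le_mul_of_nonneg_right hpa1 hS0
      have c2 := mul_le_mul_of_nonneg_right hpa2 hS0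
      have c3 := mul_le_mul_of_nonneg_right
        ((div_le_self ha3 hsqrt2).trans hpa3) hS0
      have c4 := mul_le_mul_of_nonneg_right
        ((div_le_self ha4 hsqrt2).trans hpa4) hS0
      have c5 := mul_le_mul_of_nonneg_right hpb1 hS0
      have c6 := mul_le_mul_of_nonneg_right hpb2 hS0
      have c7 := mul_le_mul_of_nonneg_right hpg hS0
      linarith only [m1, m2, m3, m4, m5, m6, m7, c1, c2, c3, c4, c5, c6, c7, hS0]
    -- energy comparison with the competitor y
    have hJ := hxmin y hyX
    unfold Jnoisy at hJ
    have hsq : ∀ q ∈ Omᶜ, dX (x q) (f q) ^ 2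
        = dXm (x q) (f q) ^ 2 + dX (y q) (f q) ^ 2 := by
      intro q hq
      have hFq : F q = f q := by rw [hFdef]; simp [hnu2 q hq]
      have e1 : dX (x q) (f q) ^ 2 = (∑ i, (wrap ((x q).1 i - (f q).1 i)) ^ 2)
          + ∑ i, ((x q).2 i - (f q).2 i) ^ 2 := by
        unfold dX; exact Real.sq_sqrt (by positivity)
      have e2 : dXm (x q) (f q) ^ 2 = ∑ i, (wrap ((x q).1 i - (f q).1 i)) ^ 2 := by
        unfold dXm; exact Real.sq_sqrt (by positivity)
      have e3 : dX (y q) (f q) ^ 2 = ∑ i, ((x q).2 i - (f q).2 i) ^ 2 := by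
        unfold dX
        rw [Real.sq_sqrt (by positivity)]
        have hz : (∑ i, (wrap ((y q).1 i - (f q).1 i)) ^ 2) = 0 := by
          apply Finset.sum_eq_zero
          intro i _
          have : (y q).1 i = (f q).1 i := by rw [hy q, hFq]
          rw [this, sub_self, wrap_zero]
          norm_num
        rw [hz, zero_add]
      rw [e1, e2, e3]
    have hsum : ∑ q ∈ Omᶜ, dX (x q) (f q) ^ 2
        = (∑ q ∈ Omᶜ, dXm (x q) (f q) ^ 2) + ∑ q ∈ Omᶜ, dX (y q) (f q) ^ 2 := by
      rw [← Finset.sum_add_distrib]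
      exact Finset.sum_congr rfl hsq
    have hkey : ∑ q ∈ Omᶜ, dXm (x q) (f q) ^ 2
        ≤ 20 * (pmax * ∑ p : Grid N M, sloc F p) := by
      linarith
    -- pass to d1Om f
    have hCd : (∑ p : Grid N M, sloc F p) ≤ C * d1Om Om f := by
      rw [← d1full_eq_sloc]
      exact hC f hf
    have hd1Om0 : 0 ≤ d1Om Om f := by
      apply Finset.sum_nonneg
      intro p _
      apply Real.iSup_nonneg
      intro q
      split
      · exact dXm_nonneg _ _
      · exact le_rfl
    have hQ0 : 0 ≤ C * d1Om Om f := le_trans hS0 hCd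
    have hP : 20 * (pmax * (C * d1Om Om f)) ≤ eps ^ 2 / (64 * B' ^ 2) := by
      rcases eq_or_lt_of_le (mul_nonneg hpm0 hQ0) with h0 | hpos
      · rw [← h0]
        norm_num
        positivity
      · have hpmpos : 0 < pmax := by
          rcases hpm0.lt_or_eq with h | h
          · exact h
          · exfalso; rw [← h] at hpos; simp at hpos
        have hQpos : 0 < C * d1Om Om f := by nlinarith
        have hd1pos : 0 < d1Om Om f := by
          rcases hd1Om0.lt_or_eq with h | h
          · exact h
          · exfalso; rw [← h] at hQpos; simp at hQpos
        have hCpos : 0 < C := by nlinarith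
        have hden : (0:ℝ) < 8 ^ 2 * 20 * pmax * C * B' ^ 2 := by positivity
        rw [le_div_iff₀ hden] at hsmall
        rw [le_div_iff₀ (by positivity : (0:ℝ) < 64 * B' ^ 2)]
        nlinarith
    have hxq : ∀ q ∈ Omᶜ, dXm (x q) (f q) ≤ eps / (8 * B') := by
      intro q hq
      have h1 : dXm (x q) (f q) ^ 2 ≤ ∑ p ∈ Omᶜ, dXm (x p) (f p) ^ 2 :=
        Finset.single_le_sum (f := fun p => dXm (x p) (f p) ^ 2)
          (fun p _ => by positivity) hq
      have h2 : 20 * (pmax * ∑ p : Grid N M, sloc F p)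
          ≤ 20 * (pmax * (C * d1Om Om f)) := by
        nlinarith [mul_le_mul_of_nonneg_left hCd hpm0]
      have h3 : dXm (x q) (f q) ^ 2 ≤ (eps / (8 * B')) ^ 2 := by
        have : (eps / (8 * B')) ^ 2 = eps ^ 2 / (64 * B' ^ 2) := by
          field_simp; ring
        rw [this]
        linarith
      have h4 := Real.sqrt_le_sqrt h3
      rwa [Real.sqrt_sq (dXm_nonneg _ _), Real.sqrt_sq (by positivity)] at h4
    -- x is a noiseless minimizer for its own data
    have hself : MinNoiseless N M Om x a1 a2 a3 a4 b1 b2 g x := by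
      refine ⟨hxX, fun p _ => rfl, ?_⟩
      intro z hzX hzf
      have h := hxmin z hzX
      unfold Jnoisy at h
      have hdata : ∑ p ∈ Omᶜ, dX (z p) (f p) ^ 2 = ∑ p ∈ Omᶜ, dX (x p) (f p) ^ 2 :=
        Finset.sum_congr rfl (fun p hp => by rw [hzf p hp])
      linarith
    have hbx := hB' x (fun p hp i => hxX p i) x hself
    -- bound dOmSup of x
    have hdOmx : dOmSup Om Nbh x ≤ dOmSup Om Nbh f + eps / (4 * B') := by
      apply Real.iSup_le
      · intro pq
        by_cases hc : pq.1 ∈ Omᶜ ∧ pq.2 ∈ Omᶜ ∧ pq.2 ∈ Nbh pq.1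
        · rw [if_pos hc]
          have e1 := hxq pq.1 hc.1
          have e2 := hxq pq.2 hc.2.1
          have ef : dXm (f pq.1) (f pq.2) ≤ dOmSup Om Nbh f := by
            have hb : BddAbove (Set.range fun pq' : Grid N M × Grid N M =>
                if pq'.1 ∈ Omᶜ ∧ pq'.2 ∈ Omᶜ ∧ pq'.2 ∈ Nbh pq'.1
                then dXm (f pq'.1) (f pq'.2) else 0) :=
              Set.Finite.bddAbove (Set.finite_range _)
            have h := le_ciSup hb pq
            rwa [if_pos hc] at h
          have t1 := dXm_triangle (x pq.1) (f pq.1) (x pq.2)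
          have t2 := dXm_triangle (f pq.1) (f pq.2) (x pq.2)
          have hsymm : dXm (f pq.2) (x pq.2) = dXm (x pq.2) (f pq.2) := dXm_symm _ _
          have hhalf : eps / (8 * B') + eps / (8 * B') = eps / (4 * B') := by
            field_simp
            ring
          linarith
        · rw [if_neg hc]
          have : 0 ≤ eps / (4 * B') := by positivity
          linarith
      · have : 0 ≤ eps / (4 * B') := by positivity
        linarith
    -- conclusion
    apply Real.iSup_le _ heps.le
    intro p
    have t := dXm_triangle (x p) (x (nu p)) (f (nu p))
    have h1 := hbx p
    have h2 := hxq (nu p) (hnu1 p)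
    have h3 : B' * dOmSup Om Nbh x ≤ B' * (dOmSup Om Nbh f + eps / (4 * B')) :=
      mul_le_mul_of_nonneg_left hdOmx hB'pos.le
    have h4 : B' * (eps / (4 * B')) = eps / 4 := by field_simp
    have h5 : eps / (8 * B') ≤ eps / 8 := by
      rw [div_le_div_iff₀ (by positivity) (by norm_num)]
      nlinarith
    rw [mul_add, h4] at h3
    linarith
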